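/- Under this setup, the expectation of the maximizing cdf of the DKW band on [0,b] equals the corresponding boosted empirical average: ∫_{(0,b)} (1 − max(F̂(t)−χ, 0)) dt = (1/k)·( χk·b + (m+1−χk)·x_m + ∑_{i=m+1}^{k−1} x_i ). (That is, shifting a χ·k fraction of the empirical probability mass to the upper bound b yields the mean of the upper DKW band cdf max(F̂−χ,0).) -/

import Mathlib

open MeasureTheory Finset ENNReal

lemma card_filter_fin_aux (k : ℕ) (p : ℕ → Prop) [DecidablePred p] :
    (Finset.univ.filter (fun j : Fin k => p (j:ℕ))).card = ((Finset.range k).filter p).card := by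
  rw [← Finset.card_image_of_injective _ Fin.val_injective]
  congr 1
  ext n
  simp only [Finset.mem_image, Finset.mem_filter, Finset.mem_univ, true_and, Finset.mem_range]
  constructor
  · rintro ⟨j, hj, rfl⟩; exact ⟨j.isLt, hj⟩
  · rintro ⟨hn, hp⟩; exact ⟨⟨n, hn⟩, hp, rfl⟩

/-- The expectation of the maximizing cdf `max(F̂−χ, 0)` of the DKW band on `[0,b]`
equals the boosted empirical average obtained by shifting a `χ·k` fraction of the
empirical probability mass to the upper bound `b`. -/
theorem dkw_upper_band_expectation_eq_boosted_average
    (k : ℕ) (hk : 1 ≤ k) (b : ℝ) (hb : 0 ≤ b)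
    (x : Fin k → ℝ) (hmono : Monotone x)
    (hx0 : ∀ i, 0 ≤ x i) (hxb : ∀ i, x i ≤ b)
    (Fhat : ℝ → ℝ)
    (hFhat : ∀ t : ℝ,
      Fhat t = (1 / (k : ℝ)) * (Finset.univ.filter (fun i : Fin k => x i ≤ t)).card)
    (χ : ℝ) (hχ0 : 0 ≤ χ) (hχ1 : χ < 1)
    (m : ℕ) (hm : m = ⌊χ * k⌋₊) (hmk : m + 1 ≤ k) :
    (∫⁻ t in Set.Ioo (0 : ℝ) b, ENNReal.ofReal (1 - max (Fhat t - χ) 0))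
      = ENNReal.ofReal ((1 / (k : ℝ)) *
          (χ * k * b + ((m : ℝ) + 1 - χ * k) * x ⟨m, by omega⟩
            + ∑ i ∈ Finset.univ.filter (fun i : Fin k => m < (i : ℕ)), x i)) := by
  have hmlt : m < k := by omega
  have hk0 : (0:ℝ) < k := by exact_mod_cast hk
  have hmχ : (m:ℝ) ≤ χ * k := by rw [hm]; exact Nat.floor_le (by positivity)
  have hχm : χ * k < (m:ℝ) + 1 := by rw [hm]; exact Nat.lt_floor_add_one _
  set xm := x ⟨m, hmlt⟩ with hxmdef
  -- pointwise identity
  have hpoint : ∀ t : ℝ, 1 - max (Fhat t - χ) 0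
      = 1 - (1/(k:ℝ)) * (((m:ℝ)+1-χ*k) * (Set.Ici xm).indicator (fun _ => (1:ℝ)) t
          + ∑ j ∈ Finset.univ.filter (fun j : Fin k => m < (j:ℕ)),
              (Set.Ici (x j)).indicator (fun _ => (1:ℝ)) t) := by
    intro t
    set c := (Finset.univ.filter (fun i : Fin k => x i ≤ t)).card with hc
    have hck : c ≤ k := le_trans (Finset.card_filter_le _ _) (by simp)
    have hmem : ∀ j : Fin k, x j ≤ t ↔ (j:ℕ) < c := by
      intro j
      constructor
      · intro hj
        have hsub : (Finset.univ.filter (fun i : Fin k => (i:ℕ) ≤ (j:ℕ)))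
            ⊆ Finset.univ.filter (fun i : Fin k => x i ≤ t) := by
          intro i hi
          simp only [Finset.mem_filter, Finset.mem_univ, true_and] at hi ⊢
          exact le_trans (hmono (show i ≤ j from hi)) hj
        have hcard := Finset.card_le_card hsub
        have h1 : (Finset.univ.filter (fun i : Fin k => (i:ℕ) ≤ (j:ℕ))).card = (j:ℕ) + 1 := by
          rw [card_filter_fin_aux k (fun n => n ≤ (j:ℕ))]
          have : (Finset.range k).filter (fun n => n ≤ (j:ℕ)) = Finset.range ((j:ℕ)+1) := by
            ext n; simp only [Finset.mem_filter, Finset.mem_range]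
            have := j.isLt; omega
          rw [this, Finset.card_range]
        omega
      · intro hj
        by_contra hxj
        have hsub : Finset.univ.filter (fun i : Fin k => x i ≤ t)
            ⊆ Finset.univ.filter (fun i : Fin k => (i:ℕ) < (j:ℕ)) := by
          intro i hi
          simp only [Finset.mem_filter, Finset.mem_univ, true_and] at hi ⊢
          by_contra hij
          exact hxj (le_trans (hmono (show j ≤ i by omega)) hi)
        have hcard := Finset.card_le_card hsub
        have h1 : (Finset.univ.filter (fun i : Fin k => (i:ℕ) < (j:ℕ))).card = (j:ℕ) := by
          rw [card_filter_fin_aux k (fun n => n < (j:ℕ))]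
          have : (Finset.range k).filter (fun n => n < (j:ℕ)) = Finset.range (j:ℕ) := by
            ext n; simp only [Finset.mem_filter, Finset.mem_range]
            have := j.isLt; omega
          rw [this, Finset.card_range]
        omega
    have hFt : Fhat t = (1/(k:ℝ)) * c := by rw [hFhat t]
    have hindm : (Set.Ici xm).indicator (fun _ => (1:ℝ)) t = if m < c then 1 else 0 := by
      simp only [Set.indicator_apply, Set.mem_Ici]
      by_cases h : xm ≤ t
      · rw [if_pos h, if_pos ((hmem ⟨m, hmlt⟩).mp h)]
      · rw [if_neg h, if_neg (fun hc => h ((hmem ⟨m, hmlt⟩).mpr hc))]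
    have hsum : ∑ j ∈ Finset.univ.filter (fun j : Fin k => m < (j:ℕ)),
        (Set.Ici (x j)).indicator (fun _ => (1:ℝ)) t = ((c - (m+1) : ℕ) : ℝ) := by
      rw [Finset.sum_filter]
      have : ∀ j : Fin k, (if m < (j:ℕ) then (Set.Ici (x j)).indicator (fun _ => (1:ℝ)) t else 0)
          = (fun n : ℕ => if m < n ∧ n < c then (1:ℝ) else 0) (j:ℕ) := by
        intro j
        simp only [Set.indicator_apply, Set.mem_Ici, hmem j]
        by_cases h1 : m < (j:ℕ) <;> by_cases h2 : (j:ℕ) < c <;> simp [h1, h2]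
      rw [Finset.sum_congr rfl (fun j _ => this j),
        Fin.sum_univ_eq_sum_range (fun n => if m < n ∧ n < c then (1:ℝ) else 0) k]
      rw [Finset.sum_boole]
      have : (Finset.range k).filter (fun n => m < n ∧ n < c) = Finset.Ico (m+1) c := by
        ext n; simp only [Finset.mem_filter, Finset.mem_range, Finset.mem_Ico]; omega
      rw [this, Nat.card_Ico]
    rw [hindm, hsum, hFt]
    by_cases hcm : c ≤ m
    · have h0 : max ((1/(k:ℝ)) * c - χ) 0 = 0 := by
        apply max_eq_right
        have : (c:ℝ) ≤ χ * k := le_trans (by exact_mod_cast hcm) hmχ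
        rw [div_mul_eq_mul_div, one_mul, sub_nonpos, div_le_iff₀ hk0]
        linarith
      rw [h0, if_neg (by omega)]
      have : c - (m+1) = 0 := by omega
      rw [this]
      simp
    · push_neg at hcm
      have h0 : max ((1/(k:ℝ)) * c - χ) 0 = (1/(k:ℝ)) * c - χ := by
        apply max_eq_left
        have h1 : χ * k < (c:ℝ) := lt_of_lt_of_le hχm (by exact_mod_cast hcm)
        rw [sub_nonneg, div_mul_eq_mul_div, one_mul, le_div_iff₀ hk0]
        linarith
      rw [h0, if_pos hcm]
      have hcast : ((c - (m+1) : ℕ) : ℝ) = (c:ℝ) - (m:ℝ) - 1 := by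
        rw [Nat.cast_sub (by omega)]; push_cast; ring
      rw [hcast]
      field_simp
      ring
  -- nonnegativity
  have hnn : ∀ t : ℝ, 0 ≤ 1 - max (Fhat t - χ) 0 := by
    intro t
    have h1 : Fhat t ≤ 1 := by
      rw [hFhat t]
      have : ((Finset.univ.filter (fun i : Fin k => x i ≤ t)).card : ℝ) ≤ (k:ℝ) := by
        exact_mod_cast le_trans (Finset.card_filter_le _ _) (by simp)
      rw [div_mul_eq_mul_div, one_mul, div_le_one hk0]; exact this
    simp only [sub_nonneg, max_le_iff]
    constructor <;> linarith
  -- integrability pieces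
  have hfin : volume (Set.Ioo (0:ℝ) b) < ⊤ := by
    rw [Real.volume_Ioo]; exact ofReal_lt_top
  have hind : ∀ cst : ℝ, Integrable ((Set.Ici cst).indicator (fun _ => (1:ℝ)))
      (volume.restrict (Set.Ioo (0:ℝ) b)) := by
    intro cst
    refine (integrable_indicator_iff measurableSet_Ici).mpr ?_
    refine (integrableOn_const_iff (C := (1:ℝ)) (by simp)).mpr (Or.inr ?_)
    rw [Measure.restrict_apply measurableSet_Ici]
    exact lt_of_le_of_lt (measure_mono Set.inter_subset_right) hfin
  have hintA : Integrable (fun t => ((m:ℝ)+1-χ*k) * (Set.Ici xm).indicator (fun _ => (1:ℝ)) t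
      + ∑ j ∈ Finset.univ.filter (fun j : Fin k => m < (j:ℕ)),
          (Set.Ici (x j)).indicator (fun _ => (1:ℝ)) t)
      (volume.restrict (Set.Ioo (0:ℝ) b)) := by
    exact ((hind xm).const_mul _).add
      (integrable_finset_sum _ (fun j _ => hind (x j)))
  have hintf : Integrable (fun t => 1 - (1/(k:ℝ)) * (((m:ℝ)+1-χ*k) * (Set.Ici xm).indicator (fun _ => (1:ℝ)) t
      + ∑ j ∈ Finset.univ.filter (fun j : Fin k => m < (j:ℕ)),
          (Set.Ici (x j)).indicator (fun _ => (1:ℝ)) t))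
      (volume.restrict (Set.Ioo (0:ℝ) b)) := by
    exact (integrable_const 1).sub (hintA.const_mul _)
  -- indicator integrals
  have hindint : ∀ cst : ℝ, 0 ≤ cst → cst ≤ b →
      ∫ t in Set.Ioo (0:ℝ) b, (Set.Ici cst).indicator (fun _ => (1:ℝ)) t = b - cst := by
    intro cst h0 hcb
    rw [MeasureTheory.setIntegral_indicator measurableSet_Ici, MeasureTheory.setIntegral_const,
      smul_eq_mul, mul_one]
    rcases eq_or_lt_of_le h0 with h | h
    · have : Set.Ioo (0:ℝ) b ∩ Set.Ici cst = Set.Ioo 0 b := by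
        apply Set.inter_eq_left.mpr
        intro y hy; rw [← h]; exact le_of_lt hy.1
      rw [this, measureReal_def, Real.volume_Ioo, ENNReal.toReal_ofReal (by linarith)]
      linarith
    · have : Set.Ioo (0:ℝ) b ∩ Set.Ici cst = Set.Ico cst b := by
        ext y
        simp only [Set.mem_inter_iff, Set.mem_Ioo, Set.mem_Ici, Set.mem_Ico]
        constructor
        · rintro ⟨⟨_, h2⟩, h3⟩; exact ⟨h3, h2⟩
        · rintro ⟨h1, h2⟩; exact ⟨⟨lt_of_lt_of_le h h1, h2⟩, h1⟩
      rw [this, measureReal_def, Real.volume_Ico, ENNReal.toReal_ofReal (by linarith)]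
  -- main computation
  simp only [hpoint]
  rw [← MeasureTheory.ofReal_integral_eq_lintegral_ofReal hintf
    (Filter.Eventually.of_forall (fun t => by
      have h := hnn t; rw [hpoint t] at h; simpa using h))]
  congr 1
  rw [integral_sub (integrable_const 1) (hintA.const_mul _), integral_const, measureReal_def,
    MeasureTheory.integral_const_mul, integral_add ((hind xm).const_mul _)
      (integrable_finset_sum _ (fun j _ => hind (x j))),
    MeasureTheory.integral_const_mul, integral_finset_sum _ (fun j _ => hind (x j))]
  rw [hindint xm (hx0 _) (hxb _)]
  have hsumint : ∑ j ∈ Finset.univ.filter (fun j : Fin k => m < (j:ℕ)),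
      (∫ t in Set.Ioo (0:ℝ) b, (Set.Ici (x j)).indicator (fun _ => (1:ℝ)) t)
      = ∑ j ∈ Finset.univ.filter (fun j : Fin k => m < (j:ℕ)), (b - x j) := by
    exact Finset.sum_congr rfl (fun j _ => hindint (x j) (hx0 j) (hxb j))
  rw [hsumint, Finset.sum_sub_distrib, Finset.sum_const]
  have hcardgt : (Finset.univ.filter (fun j : Fin k => m < (j:ℕ))).card = k - (m+1) := by
    rw [card_filter_fin_aux k (fun n => m < n)]
    have : (Finset.range k).filter (fun n => m < n) = Finset.Ico (m+1) k := by
      ext n; simp only [Finset.mem_filter, Finset.mem_range, Finset.mem_Ico]; omega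
    rw [this, Nat.card_Ico]
  rw [hcardgt]
  have hvol : (volume.restrict (Set.Ioo (0:ℝ) b) Set.univ).toReal = b := by
    rw [Measure.restrict_apply MeasurableSet.univ, Set.univ_inter, Real.volume_Ioo,
      ENNReal.toReal_ofReal (by linarith), sub_zero]
  rw [hvol]
  have hcast2 : ((k - (m+1) : ℕ) : ℝ) = (k:ℝ) - (m:ℝ) - 1 := by
    rw [Nat.cast_sub hmk]; push_cast; ring
  simp only [smul_eq_mul, nsmul_eq_mul, mul_one]
  rw [hcast2]
  field_simp
  ring
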